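/- Let h : ℝ → ℝ be six times continuously differentiable in a neighborhood of x ∈ ℝ and let s ∈ ℝ be fixed. Then the approximate-coefficient MQ-RBF reconstruction satisfies (1/2 + (1/4)·s·Δx²)·(h̄₀ + h̄₊) = h(x) + ((1/2)·s·h(x) + (1/6)·h''(x))·Δx² + ((1/12)·s·h''(x) + (1/120)·h⁽⁴⁾(x))·Δx⁴ + O(Δx⁶). -/

import Mathlib

set_option maxHeartbeats 1000000

open Set intervalIntegral MeasureTheory

/-- On a closed interval inside an open set where `f` is `C^n`, the iterated derivative
within the interval agrees with the global iterated derivative. -/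
lemma idw_eq_id {f : ℝ → ℝ} {u : Set ℝ} (hu : IsOpen u) {n : ℕ}
    (hf : ContDiffOn ℝ n f u) {a b : ℝ} (hab : a < b) (hsub : Set.Icc a b ⊆ u)
    {m : ℕ} (hm : m ≤ n) {y : ℝ} (hy : y ∈ Set.Icc a b) :
    iteratedDerivWithin m f (Set.Icc a b) y = iteratedDeriv m f y := by
  have hp : HasFTaylorSeriesUpToOn n f (ftaylorSeriesWithin ℝ f u) u :=
    hf.ftaylorSeriesWithin hu.uniqueDiffOn
  have h1 := (hp.mono hsub).eq_iteratedFDerivWithin_of_uniqueDiffOn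
    (by exact_mod_cast hm) (uniqueDiffOn_Icc hab) hy
  have h2 : iteratedFDerivWithin ℝ m f u y = iteratedFDeriv ℝ m f y :=
    iteratedFDerivWithin_of_isOpen m hu (hsub hy)
  rw [iteratedDerivWithin_eq_iteratedFDerivWithin, iteratedDeriv_eq_iteratedFDeriv, ← h1]
  rw [show ftaylorSeriesWithin ℝ f u y m = iteratedFDerivWithin ℝ m f u y from rfl, h2]

/-- Expansion of the approximate-coefficient k = 2 MQ-RBF reconstruction:
`(1/2 + (1/4)sΔx²)(h̄₀ + h̄₊) = h(x) + ((1/2)s·h + (1/6)h'')Δx²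
  + ((1/12)s·h'' + (1/120)h⁽⁴⁾)Δx⁴ + O(Δx⁶)`. -/
theorem stmt_7 (h : ℝ → ℝ) (x : ℝ) (hh : ContDiffAt ℝ 6 h x) (s : ℝ) :
    ∃ C > 0, ∃ d₀ > 0, ∀ d : ℝ, 0 < d → d < d₀ →
      |(1 / 2 + (1 / 4) * s * d ^ 2)
            * ((1 / d) * (∫ ξ in (x - d)..x, h ξ) + (1 / d) * ∫ ξ in x..(x + d), h ξ)
          - h x
          - ((1 / 2) * s * h x + (1 / 6) * iteratedDeriv 2 h x) * d ^ 2
          - ((1 / 12) * s * iteratedDeriv 2 h x + (1 / 120) * iteratedDeriv 4 h x) * d ^ 4|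
        ≤ C * d ^ 6 := by
  -- get an open set on which h is C^6
  obtain ⟨v, hv, hhv⟩ := hh.contDiffOn le_rfl (by simp)
  obtain ⟨ε, hε, hball⟩ := Metric.mem_nhds_iff.mp (interior_mem_nhds.mpr hv)
  have hhu : ContDiffOn ℝ 6 h (Metric.ball x ε) :=
    (hhv.mono interior_subset).mono hball
  set δ : ℝ := ε / 3 with hδdef
  have hδ : 0 < δ := by positivity
  -- the symmetrized function
  set g : ℝ → ℝ := fun t => h (x + t) + h (x - t) with hgdef
  set w : Set ℝ := Metric.ball (0 : ℝ) (2 * δ) with hwdef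
  have hwopen : IsOpen w := Metric.isOpen_ball
  have h2δε : 2 * δ < ε := by rw [hδdef]; linarith
  have hmap1 : Set.MapsTo (fun t => x + t) w (Metric.ball x ε) := by
    intro t ht
    simp only [hwdef, Metric.mem_ball, Real.dist_eq, sub_zero] at ht ⊢
    have : |x + t - x| = |t| := by ring_nf
    rw [this]; linarith
  have hmap2 : Set.MapsTo (fun t => x - t) w (Metric.ball x ε) := by
    intro t ht
    simp only [hwdef, Metric.mem_ball, Real.dist_eq, sub_zero] at ht ⊢
    have : |x - t - x| = |t| := by rw [show x - t - x = -t by ring, abs_neg]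
    rw [this]; linarith
  have hg1 : ContDiffOn ℝ 6 (fun t => h (x + t)) w :=
    hhu.comp ((contDiff_const.add contDiff_id).contDiffOn) hmap1
  have hg2 : ContDiffOn ℝ 6 (fun t => h (x - t)) w :=
    hhu.comp ((contDiff_const.sub contDiff_id).contDiffOn) hmap2
  have hgw : ContDiffOn ℝ 6 g w := hg1.add hg2
  have hIccw : Set.Icc (0 : ℝ) δ ⊆ w := by
    intro t ht
    simp only [hwdef, Metric.mem_ball, Real.dist_eq, sub_zero]
    rw [abs_of_nonneg ht.1]; linarith [ht.2]
  have hgIcc : ContDiffOn ℝ 6 g (Set.Icc 0 δ) := hgw.mono hIccw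
  -- iterated derivatives of g at 0
  have hg1k : ∀ k : ℕ, iteratedDeriv k (fun t => h (x + t)) 0 = iteratedDeriv k h x := by
    intro k
    rw [iteratedDeriv_comp_const_add k h x]
    simp
  have hg2k : ∀ k : ℕ, iteratedDeriv k (fun t => h (x - t)) 0
      = (-1 : ℝ) ^ k * iteratedDeriv k h x := by
    intro k
    have : (fun t : ℝ => h (x - t)) = fun t => (fun u => h (x + u)) (-t) := by
      funext t; rw [sub_eq_add_neg]
    rw [this, iteratedDeriv_comp_neg k (fun u => h (x + u)) 0, neg_zero,
      hg1k k, smul_eq_mul]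
  have h0mem : (0 : ℝ) ∈ Set.Icc (0 : ℝ) δ := ⟨le_refl _, hδ.le⟩
  have hgk : ∀ k : ℕ, k ≤ 6 →
      iteratedDerivWithin k g (Set.Icc 0 δ) 0
        = (1 + (-1 : ℝ) ^ k) * iteratedDeriv k h x := by
    intro k hk
    have hadd : iteratedDerivWithin k g (Set.Icc 0 δ) 0
        = iteratedDerivWithin k (fun t => h (x + t)) (Set.Icc 0 δ) 0
          + iteratedDerivWithin k (fun t => h (x - t)) (Set.Icc 0 δ) 0 := by
      have := iteratedDerivWithin_add (𝕜 := ℝ) (n := k)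
        (f := fun t => h (x + t)) (g := fun t => h (x - t))
        (s := Set.Icc 0 δ) (x := 0) h0mem (uniqueDiffOn_Icc hδ)
        ((hg1.mono hIccw 0 h0mem).of_le (by exact_mod_cast hk))
        ((hg2.mono hIccw 0 h0mem).of_le (by exact_mod_cast hk))
      exact this
    rw [hadd,
      idw_eq_id hwopen hg1 hδ hIccw hk h0mem,
      idw_eq_id hwopen hg2 hδ hIccw hk h0mem,
      hg1k k, hg2k k]
    ring
  -- Taylor polynomial of g at 0
  have hPexp : ∀ t : ℝ, taylorWithinEval g 5 (Set.Icc 0 δ) 0 t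
      = 2 * h x + iteratedDeriv 2 h x * t ^ 2 + iteratedDeriv 4 h x / 12 * t ^ 4 := by
    intro t
    rw [taylor_within_apply]
    rw [Finset.sum_range_succ, Finset.sum_range_succ, Finset.sum_range_succ,
      Finset.sum_range_succ, Finset.sum_range_succ, Finset.sum_range_one]
    rw [hgk 0 (by norm_num), hgk 1 (by norm_num), hgk 2 (by norm_num),
      hgk 3 (by norm_num), hgk 4 (by norm_num), hgk 5 (by norm_num)]
    simp only [smul_eq_mul]
    norm_num [Nat.factorial]
    ring
  -- bound on the 6th derivative
  obtain ⟨M, hM⟩ := (isCompact_Icc (a := (0:ℝ)) (b := δ)).exists_bound_of_continuousOn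
    (hgIcc.continuousOn_iteratedDerivWithin le_rfl (uniqueDiffOn_Icc hδ))
  have hM0 : 0 ≤ M := le_trans (norm_nonneg _) (hM 0 h0mem)
  -- Taylor remainder bound
  have htaylor : ∀ t ∈ Set.Icc (0:ℝ) δ,
      |g t - taylorWithinEval g 5 (Set.Icc 0 δ) 0 t| ≤ M * t ^ 6 / 120 := by
    intro t ht
    have := taylor_mean_remainder_bound (f := g) (a := 0) (b := δ) (n := 5) hδ.le
      (by exact_mod_cast hgIcc) ht (fun y hy => hM y hy)
    simpa [Nat.factorial] using this
  -- fix the constant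
  set c4 : ℝ := iteratedDeriv 4 h x with hc4
  set c2 : ℝ := iteratedDeriv 2 h x with hc2
  refine ⟨|s| * |c4| / 240 + (1/2 + |s| * δ ^ 2 / 4) * M / 840 + 1, by positivity, δ, hδ, ?_⟩
  intro d hd hdδ
  have hdne : d ≠ 0 := hd.ne'
  have hIccd : Set.Icc (0:ℝ) d ⊆ Set.Icc (0:ℝ) δ := Set.Icc_subset_Icc le_rfl hdδ.le
  -- continuity / integrability facts
  have hcont1 : ContinuousOn (fun t => h (x + t)) (Set.Icc 0 δ) :=
    (hg1.mono hIccw).continuousOn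
  have hcont2 : ContinuousOn (fun t => h (x - t)) (Set.Icc 0 δ) :=
    (hg2.mono hIccw).continuousOn
  have hint1 : IntervalIntegrable (fun t => h (x + t)) volume 0 d :=
    (hcont1.mono hIccd).intervalIntegrable_of_Icc hd.le
  have hint2 : IntervalIntegrable (fun t => h (x - t)) volume 0 d :=
    (hcont2.mono hIccd).intervalIntegrable_of_Icc hd.le
  have hintg : IntervalIntegrable g volume 0 d := hint1.add hint2
  have hPc : Continuous (fun t : ℝ => 2 * h x + c2 * t ^ 2 + c4 / 12 * t ^ 4) :=
    (continuous_const.add (continuous_const.mul (continuous_pow 2))).add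
      (continuous_const.mul (continuous_pow 4))
  have hintP : IntervalIntegrable (fun t : ℝ => 2 * h x + c2 * t ^ 2 + c4 / 12 * t ^ 4)
      volume 0 d := hPc.intervalIntegrable _ _
  -- relate the two integrals to ∫ g
  have hI1 : (∫ t in (0:ℝ)..d, h (x + t)) = ∫ ξ in x..(x + d), h ξ := by
    rw [intervalIntegral.integral_comp_add_left h x, add_zero]
  have hI2 : (∫ t in (0:ℝ)..d, h (x - t)) = ∫ ξ in (x - d)..x, h ξ := by
    rw [intervalIntegral.integral_comp_sub_left h x, sub_zero]
  have hsplit : (∫ t in (0:ℝ)..d, g t)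
      = (∫ ξ in (x - d)..x, h ξ) + ∫ ξ in x..(x + d), h ξ := by
    rw [show (∫ t in (0:ℝ)..d, g t)
        = ∫ t in (0:ℝ)..d, (h (x + t) + h (x - t)) from rfl,
      intervalIntegral.integral_add hint1 hint2, hI1, hI2]
    ring
  -- the error term
  set E : ℝ := ∫ t in (0:ℝ)..d, (g t - (2 * h x + c2 * t ^ 2 + c4 / 12 * t ^ 4)) with hE
  have hEbound : |E| ≤ M * d ^ 7 / 840 := by
    have habs : |E| ≤ ∫ t in (0:ℝ)..d, |g t - (2 * h x + c2 * t ^ 2 + c4 / 12 * t ^ 4)| :=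
      intervalIntegral.abs_integral_le_integral_abs hd.le
    have hmono : (∫ t in (0:ℝ)..d, |g t - (2 * h x + c2 * t ^ 2 + c4 / 12 * t ^ 4)|)
        ≤ ∫ t in (0:ℝ)..d, M * t ^ 6 / 120 := by
      apply intervalIntegral.integral_mono_on hd.le
      · exact ((hintg.sub hintP).abs)
      · exact ((continuous_const.mul (continuous_pow 6)).div_const 120).intervalIntegrable _ _
      · intro t ht
        have ht' : t ∈ Set.Icc (0:ℝ) δ := hIccd ht
        have := htaylor t ht'
        rwa [hPexp t] at this
    have hval : (∫ t in (0:ℝ)..d, M * t ^ 6 / 120) = M * d ^ 7 / 840 := by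
      rw [show (fun t : ℝ => M * t ^ 6 / 120) = fun t : ℝ => (M / 120) * t ^ 6 by
        funext t; ring]
      rw [intervalIntegral.integral_const_mul, integral_pow]
      norm_num; ring
    calc |E| ≤ _ := habs
      _ ≤ _ := hmono
      _ = M * d ^ 7 / 840 := hval
  -- value of the polynomial integral
  have hTP : (∫ t in (0:ℝ)..d, (2 * h x + c2 * t ^ 2 + c4 / 12 * t ^ 4))
      = 2 * h x * d + c2 * d ^ 3 / 3 + c4 * d ^ 5 / 60 := by
    rw [intervalIntegral.integral_add (f := fun t => 2 * h x + c2 * t ^ 2) (g := fun t => c4 / 12 * t ^ 4)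
        ((continuous_const.add (continuous_const.mul (continuous_pow 2))).intervalIntegrable _ _)
        ((continuous_const.mul (continuous_pow 4)).intervalIntegrable _ _),
      intervalIntegral.integral_add (f := fun _ => 2 * h x) (g := fun t => c2 * t ^ 2)
        (continuous_const.intervalIntegrable _ _)
        ((continuous_const.mul (continuous_pow 2)).intervalIntegrable _ _),
      intervalIntegral.integral_const,
      intervalIntegral.integral_const_mul, intervalIntegral.integral_const_mul,
      integral_pow, integral_pow]
    norm_num; ring
  have hgsum : (∫ ξ in (x - d)..x, h ξ) + (∫ ξ in x..(x + d), h ξ)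
      = 2 * h x * d + c2 * d ^ 3 / 3 + c4 * d ^ 5 / 60 + E := by
    rw [← hsplit, hE, intervalIntegral.integral_sub hintg hintP, hTP]
    ring
  -- final algebra
  have hkey : (1 / 2 + (1 / 4) * s * d ^ 2)
            * ((1 / d) * (∫ ξ in (x - d)..x, h ξ) + (1 / d) * ∫ ξ in x..(x + d), h ξ)
          - h x
          - ((1 / 2) * s * h x + (1 / 6) * c2) * d ^ 2
          - ((1 / 12) * s * c2 + (1 / 120) * c4) * d ^ 4
      = s * c4 / 240 * d ^ 6 + (1 / 2 + (1 / 4) * s * d ^ 2) * (E / d) := by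
    have : (1 / d) * (∫ ξ in (x - d)..x, h ξ) + (1 / d) * ∫ ξ in x..(x + d), h ξ
        = ((∫ ξ in (x - d)..x, h ξ) + (∫ ξ in x..(x + d), h ξ)) / d := by ring
    rw [this, hgsum]
    field_simp
    ring
  rw [hkey]
  have hb1 : |s * c4 / 240 * d ^ 6| ≤ |s| * |c4| / 240 * d ^ 6 := by
    rw [abs_mul, abs_div, abs_mul, abs_pow, abs_of_pos hd]
    norm_num
  have hb2 : |(1 / 2 + (1 / 4) * s * d ^ 2) * (E / d)|
      ≤ (1/2 + |s| * δ ^ 2 / 4) * M / 840 * d ^ 6 := by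
    rw [abs_mul]
    have h1 : |1 / 2 + (1 / 4) * s * d ^ 2| ≤ 1/2 + |s| * δ ^ 2 / 4 := by
      calc |1 / 2 + (1 / 4) * s * d ^ 2| ≤ |1/2| + |(1/4) * s * d ^ 2| := abs_add_le _ _
        _ = 1/2 + 1/4 * |s| * d ^ 2 := by
            rw [abs_mul, abs_mul, abs_pow, abs_of_pos hd,
              abs_of_pos (by norm_num : (0:ℝ) < 1/2), abs_of_pos (by norm_num : (0:ℝ) < 1/4)]
        _ ≤ 1/2 + |s| * δ ^ 2 / 4 := by
            have : d ^ 2 ≤ δ ^ 2 := by nlinarith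
            nlinarith [abs_nonneg s]
    have h2 : |E / d| ≤ M * d ^ 6 / 840 := by
      rw [abs_div, abs_of_pos hd, div_le_iff₀ hd]
      calc |E| ≤ M * d ^ 7 / 840 := hEbound
        _ = M * d ^ 6 / 840 * d := by ring
    calc |1 / 2 + (1 / 4) * s * d ^ 2| * |E / d|
        ≤ (1/2 + |s| * δ ^ 2 / 4) * (M * d ^ 6 / 840) := by
          apply mul_le_mul h1 h2 (abs_nonneg _) (by positivity)
      _ = (1/2 + |s| * δ ^ 2 / 4) * M / 840 * d ^ 6 := by ring
  calc |s * c4 / 240 * d ^ 6 + (1 / 2 + (1 / 4) * s * d ^ 2) * (E / d)|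
      ≤ |s * c4 / 240 * d ^ 6| + |(1 / 2 + (1 / 4) * s * d ^ 2) * (E / d)| := abs_add_le _ _
    _ ≤ |s| * |c4| / 240 * d ^ 6 + (1/2 + |s| * δ ^ 2 / 4) * M / 840 * d ^ 6 :=
        add_le_add hb1 hb2
    _ ≤ (|s| * |c4| / 240 + (1/2 + |s| * δ ^ 2 / 4) * M / 840 + 1) * d ^ 6 := by nlinarith [pow_pos hd 6]
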